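/- Let ν_A ≥ ν_B ≥ 1/2 and let x be a real number. The 4×4 real matrix γ with diagonal blocks ν_A·1, ν_B·1 and off-diagonal blocks x·1 satisfies γ + (i/2)·diag(Ω, -Ω) ≥ 0 and γ - (i/2)·diag(Ω, -Ω) ≥ 0 if and only if x² ≤ (ν_A + 1/2)(ν_B - 1/2). -/

import Mathlib

open Matrix
open scoped ComplexOrder

noncomputable def Ω : Matrix (Fin 2) (Fin 2) ℝ := !![0, 1; -1, 0]

private lemma quad_nonneg' (α γ x u w : ℝ) (hα : 0 ≤ α) (hγ : 0 ≤ γ) (h : x^2 ≤ α*γ) :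
    0 ≤ α*u^2 + 2*x*u*w + γ*w^2 := by
  rcases eq_or_lt_of_le hα with h0 | hpos
  · have hx : x = 0 := by nlinarith [sq_nonneg x]
    subst hx
    nlinarith [mul_nonneg hγ (sq_nonneg w), mul_nonneg hα (sq_nonneg u)]
  · nlinarith [sq_nonneg (α*u + x*w), mul_nonneg (by nlinarith : (0:ℝ) ≤ α*γ - x^2) (sq_nonneg w), hpos]

set_option maxHeartbeats 1000000 in
theorem thermal_coupling_physical_iff (νA νB x : ℝ) (hAB : νA ≥ νB) (hB : νB ≥ 1/2) :
    (((Matrix.fromBlocks (νA • 1) (x • 1) (x • 1) (νB • 1) :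
          Matrix (Fin 2 ⊕ Fin 2) (Fin 2 ⊕ Fin 2) ℝ).map Complex.ofReal
        + (Complex.I / 2) • ((Matrix.fromBlocks Ω 0 0 (-Ω)).map Complex.ofReal)).PosSemidef ∧
     ((Matrix.fromBlocks (νA • 1) (x • 1) (x • 1) (νB • 1) :
          Matrix (Fin 2 ⊕ Fin 2) (Fin 2 ⊕ Fin 2) ℝ).map Complex.ofReal
        - (Complex.I / 2) • ((Matrix.fromBlocks Ω 0 0 (-Ω)).map Complex.ofReal)).PosSemidef)
    ↔ x^2 ≤ (νA + 1/2) * (νB - 1/2) := by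
  have hA : νA ≥ 1/2 := le_trans hB hAB
  constructor
  · rintro ⟨h, -⟩
    have h2 := h.dotProduct_mulVec_nonneg (Sum.elim ![Complex.I * (-x : ℝ), ((-x : ℝ) : ℂ)]
      ![Complex.I * ((νA + 1/2 : ℝ) : ℂ), ((νA + 1/2 : ℝ) : ℂ)])
    simp only [dotProduct, mulVec, Fintype.sum_sum_type, Fin.sum_univ_two, Matrix.add_apply,
      Matrix.smul_apply, Matrix.map_apply, fromBlocks_apply₁₁, fromBlocks_apply₁₂,
      fromBlocks_apply₂₁, fromBlocks_apply₂₂, Matrix.one_apply, Ω,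
      Matrix.zero_apply, Matrix.neg_apply, Matrix.cons_val', Matrix.cons_val_zero,
      Matrix.cons_val_one, Matrix.head_cons, Matrix.head_fin_const, Matrix.empty_val',
      Matrix.cons_val_fin_one, smul_eq_mul, Pi.star_apply, Sum.elim_inl, Sum.elim_inr] at h2
    rw [Complex.le_def] at h2
    obtain ⟨h2, -⟩ := h2
    simp only [Complex.zero_re, Complex.add_re, Complex.mul_re, Complex.mul_im, Complex.add_im,
      Complex.I_re, Complex.I_im, Complex.ofReal_re, Complex.ofReal_im, Complex.conj_re,
      Complex.conj_im, Complex.neg_re, Complex.neg_im, Complex.div_re, Complex.div_im,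
      Complex.normSq_apply, _root_.map_mul, Complex.conj_I, _root_.map_neg,
      Complex.conj_ofReal] at h2
    norm_num at h2
    nlinarith [h2]
  · intro hx
    have hx' : x^2 ≤ (νA - 1/2) * (νB + 1/2) := by nlinarith
    constructor
    · apply Matrix.PosSemidef.of_dotProduct_mulVec_nonneg
      · rw [Matrix.IsHermitian]
        ext i j
        rcases i with i | i <;> rcases j with j | j <;> fin_cases i <;> fin_cases j <;>
          simp [Matrix.conjTranspose_apply, Ω, Matrix.one_apply, Complex.ext_iff] <;> norm_num
      · intro v
        simp only [dotProduct, mulVec, Fintype.sum_sum_type, Fin.sum_univ_two, Matrix.add_apply,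
          Matrix.smul_apply, Matrix.map_apply, fromBlocks_apply₁₁, fromBlocks_apply₁₂,
          fromBlocks_apply₂₁, fromBlocks_apply₂₂, Matrix.one_apply, Ω,
          Matrix.zero_apply, Matrix.neg_apply, Matrix.cons_val', Matrix.cons_val_zero,
          Matrix.cons_val_one, Matrix.head_cons, Matrix.head_fin_const, Matrix.empty_val',
          Matrix.cons_val_fin_one, smul_eq_mul, Pi.star_apply]
        norm_num
        rw [Complex.le_def]
        constructor
        · simp only [Complex.zero_re, Complex.add_re, Complex.mul_re, Complex.mul_im,
            Complex.add_im, Complex.I_re, Complex.I_im, Complex.ofReal_re, Complex.ofReal_im,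
            Complex.conj_re, Complex.conj_im, Complex.neg_re, Complex.neg_im, Complex.div_re,
            Complex.div_im, Complex.normSq_apply]
          norm_num
          ring
          nlinarith [quad_nonneg' (νA+1/2) (νB-1/2) x ((v (Sum.inl 0)).re - (v (Sum.inl 1)).im)
              ((v (Sum.inr 0)).re - (v (Sum.inr 1)).im) (by linarith) (by linarith) hx,
            quad_nonneg' (νA+1/2) (νB-1/2) x ((v (Sum.inl 0)).im + (v (Sum.inl 1)).re)
              ((v (Sum.inr 0)).im + (v (Sum.inr 1)).re) (by linarith) (by linarith) hx,
            quad_nonneg' (νA-1/2) (νB+1/2) x ((v (Sum.inl 0)).re + (v (Sum.inl 1)).im)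
              ((v (Sum.inr 0)).re + (v (Sum.inr 1)).im) (by linarith) (by linarith) hx',
            quad_nonneg' (νA-1/2) (νB+1/2) x ((v (Sum.inl 0)).im - (v (Sum.inl 1)).re)
              ((v (Sum.inr 0)).im - (v (Sum.inr 1)).re) (by linarith) (by linarith) hx']
        · simp only [Complex.zero_im, Complex.add_im, Complex.mul_re, Complex.mul_im,
            Complex.add_re, Complex.I_re, Complex.I_im, Complex.ofReal_re, Complex.ofReal_im,
            Complex.conj_re, Complex.conj_im, Complex.neg_re, Complex.neg_im, Complex.div_re,
            Complex.div_im, Complex.normSq_apply]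
          norm_num
          ring
    · apply Matrix.PosSemidef.of_dotProduct_mulVec_nonneg
      · rw [Matrix.IsHermitian]
        ext i j
        rcases i with i | i <;> rcases j with j | j <;> fin_cases i <;> fin_cases j <;>
          simp [Matrix.conjTranspose_apply, Ω, Matrix.one_apply, Complex.ext_iff] <;> norm_num
      · intro v
        simp only [dotProduct, mulVec, Fintype.sum_sum_type, Fin.sum_univ_two, Matrix.sub_apply,
          Matrix.smul_apply, Matrix.map_apply, fromBlocks_apply₁₁, fromBlocks_apply₁₂,
          fromBlocks_apply₂₁, fromBlocks_apply₂₂, Matrix.one_apply, Ω,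
          Matrix.zero_apply, Matrix.neg_apply, Matrix.cons_val', Matrix.cons_val_zero,
          Matrix.cons_val_one, Matrix.head_cons, Matrix.head_fin_const, Matrix.empty_val',
          Matrix.cons_val_fin_one, smul_eq_mul, Pi.star_apply]
        norm_num
        rw [Complex.le_def]
        constructor
        · simp only [Complex.zero_re, Complex.add_re, Complex.sub_re, Complex.mul_re,
            Complex.mul_im, Complex.add_im, Complex.sub_im, Complex.I_re, Complex.I_im,
            Complex.ofReal_re, Complex.ofReal_im, Complex.conj_re, Complex.conj_im,
            Complex.neg_re, Complex.neg_im, Complex.div_re, Complex.div_im, Complex.normSq_apply]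
          norm_num
          ring
          nlinarith [quad_nonneg' (νA-1/2) (νB+1/2) x ((v (Sum.inl 0)).re - (v (Sum.inl 1)).im)
              ((v (Sum.inr 0)).re - (v (Sum.inr 1)).im) (by linarith) (by linarith) hx',
            quad_nonneg' (νA-1/2) (νB+1/2) x ((v (Sum.inl 0)).im + (v (Sum.inl 1)).re)
              ((v (Sum.inr 0)).im + (v (Sum.inr 1)).re) (by linarith) (by linarith) hx',
            quad_nonneg' (νA+1/2) (νB-1/2) x ((v (Sum.inl 0)).re + (v (Sum.inl 1)).im)
              ((v (Sum.inr 0)).re + (v (Sum.inr 1)).im) (by linarith) (by linarith) hx,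
            quad_nonneg' (νA+1/2) (νB-1/2) x ((v (Sum.inl 0)).im - (v (Sum.inl 1)).re)
              ((v (Sum.inr 0)).im - (v (Sum.inr 1)).re) (by linarith) (by linarith) hx]
        · simp only [Complex.zero_im, Complex.add_im, Complex.sub_im, Complex.mul_re,
            Complex.mul_im, Complex.add_re, Complex.sub_re, Complex.I_re, Complex.I_im,
            Complex.ofReal_re, Complex.ofReal_im, Complex.conj_re, Complex.conj_im,
            Complex.neg_re, Complex.neg_im, Complex.div_re, Complex.div_im, Complex.normSq_apply]
          norm_num
          ring
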